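/- Let M = UΣVᵀ be a rank-r matrix in ℝ^{n×n} satisfying assumptions A1 and A2 with parameter δ_d, and let Ω be generated by a d-regular bipartite graph whose biadjacency matrix G satisfies G1 and G2 with constant C. Suppose √(2·(δ_d² + C²μ₀²r²/d)) < 1/2. Then every Z ∈ ℝ^{n×n} with P_Ω(Z) = 0 and P_T(Z) ≠ 0 satisfies ‖P_{T⊥}(Z)‖_F > √(d/(2n))·‖P_T(Z)‖_F; in particular ‖P_{T⊥}(Z)‖_* > √(d/(2n))·‖P_T(Z)‖_F. -/

import Mathlib

open Matrix
open scoped BigOperators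

noncomputable section

/-- Euclidean norm of a vector. -/
def vecNorm {β : Type*} [Fintype β] (x : β → ℝ) : ℝ :=
  Real.sqrt (∑ i, x i ^ 2)

/-- Spectral norm (largest singular value) of a real matrix. -/
def specNorm {α β : Type*} [Fintype α] [Fintype β] (A : Matrix α β ℝ) : ℝ :=
  sSup {c | ∃ x : β → ℝ, vecNorm x ≤ 1 ∧ c = vecNorm (A.mulVec x)}

/-- Second largest singular value of a real matrix (Courant–Fischer characterization). -/
def sigma2 {α β : Type*} [Fintype α] [Fintype β] (A : Matrix α β ℝ) : ℝ :=
  ⨅ v : β → ℝ, sSup {c | ∃ x : β → ℝ,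
    vecNorm x ≤ 1 ∧ (∑ i, v i * x i) = 0 ∧ c = vecNorm (A.mulVec x)}

/-- Frobenius norm. -/
def frobNorm {α β : Type*} [Fintype α] [Fintype β] (A : Matrix α β ℝ) : ℝ :=
  Real.sqrt (∑ i, ∑ j, A i j ^ 2)

/-- Nuclear norm: the sum of the singular values, i.e. the trace of `√(AᵀA)`. -/
def nuclearNorm {α β : Type*} [Fintype α] [Fintype β] [DecidableEq β]
    (A : Matrix α β ℝ) : ℝ :=
  ((Matrix.posSemidef_conjTranspose_mul_self A).1.eigenvectorUnitary.1 *
      Matrix.diagonal (Real.sqrt ∘ (Matrix.posSemidef_conjTranspose_mul_self A).1.eigenvalues) *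
      (star (Matrix.posSemidef_conjTranspose_mul_self A).1.eigenvectorUnitary :
        Matrix β β ℝ)).trace

/-- The sampling operator `P_Ω`. -/
def sampl {n : ℕ} (Ω : Finset (Fin n × Fin n)) (M : Matrix (Fin n) (Fin n) ℝ) :
    Matrix (Fin n) (Fin n) ℝ :=
  Matrix.of fun i j => if (i, j) ∈ Ω then M i j else 0

/-- The biadjacency matrix `G` of the bipartite graph with edge set `Ω`. -/
def biadj {n : ℕ} (Ω : Finset (Fin n × Fin n)) : Matrix (Fin n) (Fin n) ℝ :=
  Matrix.of fun i j => if (i, j) ∈ Ω then (1 : ℝ) else 0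

/-- `Ω` is the edge set of a `d`-regular bipartite graph: every row and every column
of `G` has exactly `d` ones. -/
def RegularSampling {n : ℕ} (Ω : Finset (Fin n × Fin n)) (d : ℕ) : Prop :=
  (∀ i : Fin n, (Finset.univ.filter fun j => (i, j) ∈ Ω).card = d) ∧
  (∀ j : Fin n, (Finset.univ.filter fun i => (i, j) ∈ Ω).card = d)

/-- Assumption G1: the all-ones vector is a top left- and right-singular vector of `G`,
with `σ₁(G) = d`. -/
def AssumptionG1 {n : ℕ} (Ω : Finset (Fin n × Fin n)) (d : ℕ) : Prop :=
  specNorm (biadj Ω) = d ∧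
  (biadj Ω).mulVec (fun _ => 1) = (fun _ => (d : ℝ)) ∧
  Matrix.vecMul (fun _ => 1) (biadj Ω) = (fun _ => (d : ℝ))

/-- Assumption G2: `σ₂(G) ≤ C·√d`. -/
def AssumptionG2 {n : ℕ} (Ω : Finset (Fin n × Fin n)) (d : ℕ) (C : ℝ) : Prop :=
  sigma2 (biadj Ω) ≤ C * Real.sqrt d

/-- Assumption A1 (`μ₀`-incoherence) for one factor: every row `U^i` satisfies
`‖U^i‖² ≤ μ₀ r / n`. -/
def IncoherentRows {n r : ℕ} (U : Matrix (Fin n) (Fin r) ℝ) (μ₀ : ℝ) : Prop :=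
  ∀ i : Fin n, (∑ k, U i k ^ 2) ≤ μ₀ * r / n

/-- Assumption A2 (strong incoherence with parameter `δ`) for one factor:
for every `S` with `|S| = d`, `‖(n/d)·∑_{k∈S} U^k (U^k)ᵀ − I‖ ≤ δ`. -/
def StrongIncoherence {n r : ℕ} (U : Matrix (Fin n) (Fin r) ℝ) (d : ℕ) (δ : ℝ) : Prop :=
  ∀ S : Finset (Fin n), S.card = d →
    specNorm (((n : ℝ) / (d : ℝ)) • (∑ k ∈ S, Matrix.vecMulVec (U k) (U k)) - 1) ≤ δ

/-- `M = U · diagonal s · Vᵀ` is a thin SVD of the rank-`r` matrix `M`. -/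
def IsThinSVD {n r : ℕ} (M : Matrix (Fin n) (Fin n) ℝ)
    (U : Matrix (Fin n) (Fin r) ℝ) (s : Fin r → ℝ) (V : Matrix (Fin n) (Fin r) ℝ) : Prop :=
  Uᵀ * U = 1 ∧ Vᵀ * V = 1 ∧ (∀ i, 0 < s i) ∧ M = U * Matrix.diagonal s * Vᵀ

/-- The projection `P_T` onto the subspace `T` spanned by matrices `UXᵀ` and `YVᵀ`. -/
def projT {n r : ℕ} (U V : Matrix (Fin n) (Fin r) ℝ) (Z : Matrix (Fin n) (Fin n) ℝ) :
    Matrix (Fin n) (Fin n) ℝ :=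
  U * Uᵀ * Z + Z * (V * Vᵀ) - U * Uᵀ * Z * (V * Vᵀ)

/-- The projection `P_{T⊥}` onto the orthogonal complement of `T`. -/
def projTperp {n r : ℕ} (U V : Matrix (Fin n) (Fin r) ℝ) (Z : Matrix (Fin n) (Fin n) ℝ) :
    Matrix (Fin n) (Fin n) ℝ :=
  (1 - U * Uᵀ) * Z * (1 - V * Vᵀ)

end

namespace StmtAux

open Matrix Finset

lemma sum_sq_nonneg {β : Type*} [Fintype β] (x : β → ℝ) : (0:ℝ) ≤ ∑ i, x i ^ 2 :=
  Finset.sum_nonneg fun i _ => sq_nonneg _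

lemma vecNorm_nonneg {β : Type*} [Fintype β] (x : β → ℝ) : 0 ≤ vecNorm x :=
  Real.sqrt_nonneg _

lemma vecNorm_sq {β : Type*} [Fintype β] (x : β → ℝ) : vecNorm x ^ 2 = ∑ i, x i ^ 2 :=
  Real.sq_sqrt (sum_sq_nonneg x)

lemma vecNorm_zero {β : Type*} [Fintype β] : vecNorm (0 : β → ℝ) = 0 := by
  simp [vecNorm]

lemma vecNorm_smul {β : Type*} [Fintype β] (t : ℝ) (x : β → ℝ) :
    vecNorm (t • x) = |t| * vecNorm x := by
  unfold vecNorm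
  rw [← Real.sqrt_sq_eq_abs, ← Real.sqrt_mul (sq_nonneg t), Finset.mul_sum]
  congr 1
  refine Finset.sum_congr rfl fun i _ => ?_
  simp only [Pi.smul_apply, smul_eq_mul]; ring

lemma vecNorm_pos {β : Type*} [Fintype β] {x : β → ℝ} (hx : x ≠ 0) : 0 < vecNorm x := by
  have : 0 < ∑ i, x i ^ 2 := by
    obtain ⟨i, hi⟩ := Function.ne_iff.mp hx
    exact Finset.sum_pos' (fun j _ => sq_nonneg _)
      ⟨i, Finset.mem_univ i, pow_pos (abs_pos.mpr hi) 2 |>.trans_le (by rw [sq_abs])⟩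
  exact Real.sqrt_pos.mpr this

/-- Cauchy–Schwarz for the dot product. -/
lemma abs_dot_le {β : Type*} [Fintype β] (x y : β → ℝ) :
    |∑ i, x i * y i| ≤ vecNorm x * vecNorm y := by
  unfold vecNorm
  rw [abs_le]
  refine ⟨?_, Real.sum_mul_le_sqrt_mul_sqrt Finset.univ x y⟩
  have := Real.sum_mul_le_sqrt_mul_sqrt Finset.univ (fun i => -x i) y
  have h2 : (∑ i, (fun i => -x i) i ^ 2) = ∑ i, x i ^ 2 := by
    refine Finset.sum_congr rfl fun i _ => by ring
  rw [h2] at this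
  simp only [neg_mul, Finset.sum_neg_distrib] at this
  linarith

end StmtAux
namespace StmtAux

lemma frobNorm_nonneg {α β : Type*} [Fintype α] [Fintype β] (A : Matrix α β ℝ) :
    0 ≤ frobNorm A := Real.sqrt_nonneg _

lemma mulVec_frob_bound {α β : Type*} [Fintype α] [Fintype β] (A : Matrix α β ℝ) (x : β → ℝ) :
    vecNorm (A.mulVec x) ≤ frobNorm A * vecNorm x := by
  unfold vecNorm frobNorm
  rw [← Real.sqrt_mul (by positivity)]
  apply Real.sqrt_le_sqrt
  calc ∑ i, (A.mulVec x) i ^ 2 ≤ ∑ i, ((∑ j, A i j ^ 2) * (∑ j, x j ^ 2)) := by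
        refine Finset.sum_le_sum fun i _ => ?_
        have : (A.mulVec x) i = ∑ j, A i j * x j := by
          simp [Matrix.mulVec, dotProduct]
        rw [this]
        exact Finset.sum_mul_sq_le_sq_mul_sq _ _ _
    _ = (∑ i, ∑ j, A i j ^ 2) * (∑ j, x j ^ 2) := by rw [Finset.sum_mul]

lemma specSet_bddAbove {α β : Type*} [Fintype α] [Fintype β] (A : Matrix α β ℝ) :
    BddAbove {c | ∃ x : β → ℝ, vecNorm x ≤ 1 ∧ c = vecNorm (A.mulVec x)} := by
  refine ⟨frobNorm A, fun c hc => ?_⟩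
  obtain ⟨x, hx, rfl⟩ := hc
  calc vecNorm (A.mulVec x) ≤ frobNorm A * vecNorm x := mulVec_frob_bound A x
    _ ≤ frobNorm A * 1 := by
        exact mul_le_mul_of_nonneg_left hx (frobNorm_nonneg A)
    _ = frobNorm A := mul_one _

lemma le_specNorm {α β : Type*} [Fintype α] [Fintype β] (A : Matrix α β ℝ) {x : β → ℝ}
    (hx : vecNorm x ≤ 1) : vecNorm (A.mulVec x) ≤ specNorm A :=
  le_csSup (specSet_bddAbove A) ⟨x, hx, rfl⟩

lemma specNorm_nonneg {α β : Type*} [Fintype α] [Fintype β] (A : Matrix α β ℝ) :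
    0 ≤ specNorm A := by
  have h := le_specNorm A (x := 0) (by rw [vecNorm_zero]; norm_num)
  rwa [Matrix.mulVec_zero, vecNorm_zero] at h

lemma mulVec_le_specNorm {α β : Type*} [Fintype α] [Fintype β] (A : Matrix α β ℝ) (x : β → ℝ) :
    vecNorm (A.mulVec x) ≤ specNorm A * vecNorm x := by
  by_cases hx : x = 0
  · subst hx; rw [Matrix.mulVec_zero, vecNorm_zero, vecNorm_zero, mul_zero]
  · have hc : 0 < vecNorm x := vecNorm_pos hx
    have h1 : vecNorm ((vecNorm x)⁻¹ • x) = 1 := by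
      rw [vecNorm_smul, abs_of_pos (by positivity), inv_mul_cancel₀ hc.ne']
    have h2 := le_specNorm A (x := (vecNorm x)⁻¹ • x) h1.le
    rw [Matrix.mulVec_smul, vecNorm_smul, abs_of_pos (by positivity)] at h2
    calc vecNorm (A.mulVec x) = vecNorm x * ((vecNorm x)⁻¹ * vecNorm (A.mulVec x)) := by
          field_simp
      _ ≤ vecNorm x * specNorm A := mul_le_mul_of_nonneg_left h2 hc.le
      _ = specNorm A * vecNorm x := mul_comm _ _

lemma abs_quad_le {β : Type*} [Fintype β] (N : Matrix β β ℝ) (a : β → ℝ) :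
    |∑ i, a i * N.mulVec a i| ≤ specNorm N * vecNorm a ^ 2 := by
  calc |∑ i, a i * N.mulVec a i| ≤ vecNorm a * vecNorm (N.mulVec a) := abs_dot_le _ _
    _ ≤ vecNorm a * (specNorm N * vecNorm a) :=
        mul_le_mul_of_nonneg_left (mulVec_le_specNorm N a) (vecNorm_nonneg a)
    _ = specNorm N * vecNorm a ^ 2 := by ring

end StmtAux
namespace StmtAux
set_option maxHeartbeats 1000000

lemma sq_le_imp_le {a b : ℝ} (ha : 0 ≤ a) (hb : 0 ≤ b) (h : a^2 ≤ b^2) : a ≤ b := by nlinarith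

lemma specSet2_bddAbove {α β : Type*} [Fintype α] [Fintype β] (A : Matrix α β ℝ) (v : β → ℝ) :
    BddAbove {c | ∃ x : β → ℝ, vecNorm x ≤ 1 ∧ (∑ i, v i * x i) = 0 ∧
      c = vecNorm (A.mulVec x)} := by
  refine ⟨frobNorm A, fun c hc => ?_⟩
  obtain ⟨x, hx, -, rfl⟩ := hc
  calc vecNorm (A.mulVec x) ≤ frobNorm A * vecNorm x := mulVec_frob_bound A x
    _ ≤ frobNorm A * 1 := mul_le_mul_of_nonneg_left hx (frobNorm_nonneg A)
    _ = frobNorm A := mul_one _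

lemma sigma2_perp {n d : ℕ} (hn : 0 < n) (G : Matrix (Fin n) (Fin n) ℝ)
    (hspec : specNorm G = d)
    (hrow : G.mulVec (fun _ => 1) = (fun _ => (d:ℝ)))
    (hcol : Matrix.vecMul (fun _ => 1) G = (fun _ => (d:ℝ)))
    (y : Fin n → ℝ) (hy : ∑ i, y i = 0) :
    vecNorm (G.mulVec y) ≤ sigma2 G * vecNorm y := by
  by_cases hy0 : y = 0
  · subst hy0; simp [Matrix.mulVec_zero, vecNorm_zero]
  have hcpos : 0 < vecNorm y := vecNorm_pos hy0
  obtain ⟨c, hc⟩ : ∃ x, x = vecNorm y := ⟨_, rfl⟩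
  have hc0 : 0 < c := hc ▸ hcpos
  obtain ⟨w, hw⟩ : ∃ x : Fin n → ℝ, x = c⁻¹ • y := ⟨_, rfl⟩
  have hwnorm : vecNorm w = 1 := by
    rw [hw, vecNorm_smul, abs_of_pos (inv_pos.mpr hc0), ← hc, inv_mul_cancel₀ hc0.ne']
  have hwsum : ∑ i, w i = 0 := by
    simp only [hw, Pi.smul_apply, smul_eq_mul, ← Finset.mul_sum, hy, mul_zero]
  have hnn : (0:ℝ) < n := by exact_mod_cast hn
  have hd0 : (0:ℝ) ≤ d := by positivity
  have hwsq : ∑ i, w i ^ 2 = 1 := by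
    have := vecNorm_sq w; rw [hwnorm] at this; simpa using this.symm
  obtain ⟨q, hq⟩ : ∃ x, x = vecNorm (G.mulVec w) := ⟨_, rfl⟩
  have hGwsq : ∑ i, (G.mulVec w) i ^ 2 = q ^ 2 := by rw [hq]; exact (vecNorm_sq _).symm
  have hq_le : q ≤ d := by
    have := mulVec_le_specNorm G w
    rwa [hwnorm, mul_one, hspec, ← hq] at this
  have hsumGw : ∑ i, (G.mulVec w) i = 0 := by
    have h := dotProduct_mulVec (fun _ => (1:ℝ)) G w
    rw [hcol] at h
    have h2 : (∑ i, (G.mulVec w) i) = ∑ i, (d:ℝ) * w i := by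
      simpa [dotProduct] using h
    rw [h2, ← Finset.mul_sum, hwsum, mul_zero]
  have hkey : q ≤ sigma2 G := by
    rw [sigma2]
    apply le_ciInf
    intro v
    obtain ⟨e, he⟩ : ∃ x : Fin n → ℝ, x = fun _ => (Real.sqrt n)⁻¹ := ⟨_, rfl⟩
    have hsn : (0:ℝ) < Real.sqrt n := Real.sqrt_pos.mpr hnn
    have hee : ∑ _i : Fin n, ((Real.sqrt n)⁻¹) ^ 2 = 1 := by
      rw [Finset.sum_const, Finset.card_univ, Fintype.card_fin, nsmul_eq_mul,
        inv_pow, Real.sq_sqrt hnn.le]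
      field_simp
    have hGe : G.mulVec e = fun _ => (d:ℝ) * (Real.sqrt n)⁻¹ := by
      funext i
      have h1 : G.mulVec e i = (Real.sqrt n)⁻¹ * ∑ j, G i j := by
        simp [Matrix.mulVec, dotProduct, he, Finset.sum_mul, mul_comm]
      have h2 : ∑ j, G i j = d := by
        have := congrFun hrow i
        simpa [Matrix.mulVec, dotProduct] using this
      rw [h1, h2, mul_comm]
    obtain ⟨α, hα⟩ : ∃ x, x = ∑ i, v i * w i := ⟨_, rfl⟩
    by_cases hα0 : α = 0
    · refine le_trans (le_of_eq hq) (le_csSup (specSet2_bddAbove G v) ⟨w, hwnorm.le, ?_, rfl⟩)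
      rw [← hα]; exact hα0
    · obtain ⟨β, hβ⟩ : ∃ x, x = ∑ i, v i * e i := ⟨_, rfl⟩
      obtain ⟨z₀, hz₀⟩ : ∃ x : Fin n → ℝ, x = α • e - β • w := ⟨_, rfl⟩
      have hz₀app : ∀ i, z₀ i = α * (Real.sqrt n)⁻¹ - β * w i := fun i => by
        simp [hz₀, he, Pi.sub_apply, Pi.smul_apply, smul_eq_mul]
      have hwe : ∑ i, (Real.sqrt n)⁻¹ * w i = 0 := by
        rw [← Finset.mul_sum, hwsum, mul_zero]
      have hz₀sq : ∑ i, z₀ i ^ 2 = α ^ 2 + β ^ 2 := by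
        have expand : ∀ i, z₀ i ^ 2 =
            α^2 * ((Real.sqrt n)⁻¹)^2 - (2*α*β) * ((Real.sqrt n)⁻¹ * w i) + β^2 * w i ^2 :=
          fun i => by rw [hz₀app i]; ring
        rw [Finset.sum_congr rfl fun i _ => expand i]
        rw [Finset.sum_add_distrib, Finset.sum_sub_distrib]
        simp only [← Finset.mul_sum]
        rw [hee, hwsum, hwsq]
        ring
      have hN : 0 < α ^ 2 + β ^ 2 := by
        have h1 : 0 < |α| := abs_pos.mpr hα0
        nlinarith [sq_abs α, sq_nonneg β]
      obtain ⟨s, hs⟩ : ∃ x, x = Real.sqrt (α ^ 2 + β ^ 2) := ⟨_, rfl⟩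
      have hs0 : 0 < s := by rw [hs]; exact Real.sqrt_pos.mpr hN
      have hss : s ^ 2 = α ^ 2 + β ^ 2 := by rw [hs]; exact Real.sq_sqrt hN.le
      have hz₀norm : vecNorm z₀ = s := by
        rw [vecNorm, hz₀sq]; exact hs.symm
      obtain ⟨z, hz⟩ : ∃ x : Fin n → ℝ, x = s⁻¹ • z₀ := ⟨_, rfl⟩
      have hznorm : vecNorm z = 1 := by
        rw [hz, vecNorm_smul, abs_of_pos (inv_pos.mpr hs0), hz₀norm, inv_mul_cancel₀ hs0.ne']
      have horth : ∑ i, v i * z i = 0 := by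
        have expand : ∀ i, v i * z i = s⁻¹ * (α * (v i * (Real.sqrt n)⁻¹) - β * (v i * w i)) :=
          fun i => by rw [hz]; simp only [Pi.smul_apply, smul_eq_mul, hz₀app i]; ring
        rw [Finset.sum_congr rfl fun i _ => expand i, ← Finset.mul_sum,
          Finset.sum_sub_distrib, ← Finset.mul_sum, ← Finset.mul_sum]
        have hβ' : ∑ i, v i * (Real.sqrt n)⁻¹ = β := by
          rw [hβ]; exact Finset.sum_congr rfl fun i _ => by rw [he]
        rw [hβ', ← hα]
        ring_nf
      have hGz₀app : ∀ i, G.mulVec z₀ i = α * ((d:ℝ) * (Real.sqrt n)⁻¹) - β * G.mulVec w i := by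
        intro i
        rw [hz₀, Matrix.mulVec_sub, Matrix.mulVec_smul, Matrix.mulVec_smul, hGe]
        simp [Pi.sub_apply, Pi.smul_apply, smul_eq_mul]
      have hGz₀sq : ∑ i, (G.mulVec z₀ i) ^ 2 = α^2 * d^2 + β^2 * q^2 := by
        have expand : ∀ i, (G.mulVec z₀ i)^2 =
            (α^2*((d:ℝ) * (Real.sqrt n)⁻¹)^2) - (2*α*β*((d:ℝ)*(Real.sqrt n)⁻¹)) * (G.mulVec w i)
              + β^2 * (G.mulVec w i)^2 := fun i => by rw [hGz₀app i]; ring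
        rw [Finset.sum_congr rfl fun i _ => expand i]
        rw [Finset.sum_add_distrib, Finset.sum_sub_distrib, Finset.sum_const,
          ← Finset.mul_sum, ← Finset.mul_sum, hsumGw, hGwsq,
          Finset.card_univ, Fintype.card_fin, nsmul_eq_mul]
        have hsq : (Real.sqrt n)^2 = (n:ℝ) := Real.sq_sqrt hnn.le
        have hD : (n:ℝ) * (α^2*((d:ℝ)*(Real.sqrt n)⁻¹)^2) = α^2 * d^2 := by
          rw [mul_pow, inv_pow, hsq]
          field_simp
        rw [hD]; ring
      have hq2 : q ^ 2 ≤ (vecNorm (G.mulVec z)) ^ 2 := by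
        have h1 : vecNorm (G.mulVec z) ^ 2 = (s⁻¹)^2 * (α^2*d^2 + β^2*q^2) := by
          rw [hz, Matrix.mulVec_smul, vecNorm_smul, abs_of_pos (inv_pos.mpr hs0)]
          rw [mul_pow, vecNorm_sq, hGz₀sq]
        rw [h1]
        have hq0 : 0 ≤ q := by rw [hq]; exact vecNorm_nonneg _
        have hqd : q^2 ≤ d^2 := pow_le_pow_left₀ hq0 hq_le 2
        have h2 : (α^2+β^2) * q^2 ≤ α^2*d^2 + β^2*q^2 := by
          have h := mul_le_mul_of_nonneg_left hqd (sq_nonneg α)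
          calc (α^2+β^2) * q^2 = α^2*q^2 + β^2*q^2 := by ring
            _ ≤ α^2*d^2 + β^2*q^2 := by linarith

        have h3 : (s⁻¹)^2 * ((α^2+β^2) * q^2) ≤ (s⁻¹)^2 * (α^2*d^2 + β^2*q^2) :=
          mul_le_mul_of_nonneg_left h2 (sq_nonneg _)
        calc q^2 = (s⁻¹)^2 * ((α^2+β^2) * q^2) := by
              rw [inv_pow, hss, inv_mul_cancel_left₀ hN.ne']
          _ ≤ _ := h3
      have hqz : q ≤ vecNorm (G.mulVec z) :=
        sq_le_imp_le (by rw [hq]; exact vecNorm_nonneg _) (vecNorm_nonneg _) hq2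
      exact hqz.trans (le_csSup (specSet2_bddAbove G v) ⟨z, hznorm.le, horth, rfl⟩)
  rw [← hc]
  have hy' : y = c • w := by rw [hw, smul_smul, mul_inv_cancel₀ hc0.ne', one_smul]
  calc vecNorm (G.mulVec y) = c * q := by
        rw [hy', Matrix.mulVec_smul, vecNorm_smul, abs_of_pos hc0, hq]
    _ ≤ c * sigma2 G := mul_le_mul_of_nonneg_left hkey hc0.le
    _ = sigma2 G * c := mul_comm _ _

end StmtAux
namespace StmtAux

lemma sum_swap_4 {ι κ σ τ : Type*} [Fintype ι] [Fintype κ] [Fintype σ] [Fintype τ]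
    (f : ι → κ → σ → τ → ℝ) :
    ∑ i, ∑ j, ∑ s, ∑ t, f i j s t = ∑ s, ∑ t, ∑ i, ∑ j, f i j s t :=
  calc ∑ i, ∑ j, ∑ s, ∑ t, f i j s t
      = ∑ i, ∑ s, ∑ j, ∑ t, f i j s t :=
        Finset.sum_congr rfl fun i _ => Finset.sum_comm
    _ = ∑ s, ∑ i, ∑ j, ∑ t, f i j s t := Finset.sum_comm
    _ = ∑ s, ∑ i, ∑ t, ∑ j, f i j s t :=
        Finset.sum_congr rfl fun s _ => Finset.sum_congr rfl fun i _ => Finset.sum_comm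
    _ = ∑ s, ∑ t, ∑ i, ∑ j, f i j s t :=
        Finset.sum_congr rfl fun s _ => Finset.sum_comm

lemma sum_sq_expand {ι κ : Type*} [Fintype ι] [Fintype κ] (s₁ : Finset ι)
    (f : ι → κ → ℝ) (a : κ → ℝ) :
    ∑ i ∈ s₁, (∑ s, f i s * a s)^2
      = ∑ s, ∑ t, (∑ i ∈ s₁, f i s * f i t) * (a s * a t) := by
  have h1 : ∀ i, (∑ s, f i s * a s)^2 = ∑ s, ∑ t, (f i s * f i t) * (a s * a t) := by
    intro i
    rw [sq, Finset.sum_mul_sum]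
    exact Finset.sum_congr rfl fun s _ => Finset.sum_congr rfl fun t _ => by ring
  rw [Finset.sum_congr rfl fun i _ => h1 i]
  rw [Finset.sum_comm]
  refine Finset.sum_congr rfl fun s _ => ?_
  rw [Finset.sum_comm]
  refine Finset.sum_congr rfl fun t _ => ?_
  rw [Finset.sum_mul]

lemma master_expand {n r : ℕ} (H : Matrix (Fin n) (Fin n) ℝ) (U : Matrix (Fin n) (Fin r) ℝ)
    (A : Matrix (Fin r) (Fin n) ℝ) (B V : Matrix (Fin n) (Fin r) ℝ) :
    ∑ i, ∑ j, H i j * ((U*A) i j * (B*Vᵀ) i j)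
      = ∑ s, ∑ t, ∑ i, ∑ j, (U i s * B i t) * (H i j * (A s j * V j t)) := by
  have h1 : ∀ i j, H i j * ((U*A) i j * (B*Vᵀ) i j)
      = ∑ s, ∑ t, (U i s * B i t) * (H i j * (A s j * V j t)) := by
    intro i j
    rw [Matrix.mul_apply, Matrix.mul_apply, Finset.sum_mul_sum, Finset.mul_sum]
    refine Finset.sum_congr rfl fun s _ => ?_
    rw [Finset.mul_sum]
    refine Finset.sum_congr rfl fun t _ => ?_
    rw [Matrix.transpose_apply]
    ring
  rw [Finset.sum_congr rfl fun i _ => Finset.sum_congr rfl fun j _ => h1 i j]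
  exact sum_swap_4 _

/-- Frobenius norm is at most the nuclear norm. -/
lemma frob_le_nuclear {α β : Type*} [Fintype α] [Fintype β] [DecidableEq β]
    (A : Matrix α β ℝ) : frobNorm A ≤ nuclearNorm A := by
  have h := Matrix.posSemidef_conjTranspose_mul_self A
  set S : Matrix β β ℝ := h.1.eigenvectorUnitary.1 *
      Matrix.diagonal (Real.sqrt ∘ h.1.eigenvalues) *
      (star h.1.eigenvectorUnitary : Matrix β β ℝ) with hSdef
  have hS : S.PosSemidef := by
    rw [hSdef]
    have := (Matrix.PosSemidef.diagonal (R := ℝ) (n := β)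
      (d := Real.sqrt ∘ h.1.eigenvalues) (fun i => Real.sqrt_nonneg _)).mul_mul_conjTranspose_same
      h.1.eigenvectorUnitary.1
    simpa [Matrix.star_eq_conjTranspose] using this
  have hSS : S * S = Aᴴ * A := by
    have hu : (star h.1.eigenvectorUnitary : Matrix β β ℝ) * h.1.eigenvectorUnitary.1 = 1 :=
      Unitary.star_mul_self_of_mem h.1.eigenvectorUnitary.2
    have hD : Matrix.diagonal (Real.sqrt ∘ h.1.eigenvalues) *
        Matrix.diagonal (Real.sqrt ∘ h.1.eigenvalues) = Matrix.diagonal h.1.eigenvalues := by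
      rw [Matrix.diagonal_mul_diagonal]
      congr 1; funext i
      exact Real.mul_self_sqrt (h.eigenvalues_nonneg i)
    conv_rhs => rw [h.1.spectral_theorem, Unitary.conjStarAlgAut_apply]
    rw [hSdef]
    calc _ = h.1.eigenvectorUnitary.1 * (Matrix.diagonal (Real.sqrt ∘ h.1.eigenvalues) *
          ((star h.1.eigenvectorUnitary : Matrix β β ℝ) * h.1.eigenvectorUnitary.1) *
          Matrix.diagonal (Real.sqrt ∘ h.1.eigenvalues)) *
          (star h.1.eigenvectorUnitary : Matrix β β ℝ) := by
            simp only [Matrix.mul_assoc]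
      _ = _ := by
        rw [hu, Matrix.mul_one, hD]
        simp
  have hherm : ∀ i j, S j i = S i j := by
    intro i j
    have := congrFun (congrFun hS.1 j) i
    simpa [Matrix.conjTranspose_apply] using this.symm
  have hdiag : ∀ i, 0 ≤ S i i := by
    intro i
    have h0 := hS.dotProduct_mulVec_nonneg (Pi.single i 1)
    simpa [dotProduct, Matrix.mulVec, Pi.single_apply, Finset.sum_ite_eq,
      Finset.mul_sum] using h0
  have hoff : ∀ i j, (S i j)^2 ≤ S i i * S j j := by
    intro i j
    by_cases hij : i = j
    · subst hij; rw [sq]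
    · have hq : ∀ t : ℝ, 0 ≤ S i i * (t * t) + (2 * S i j) * t + S j j := by
        intro t
        have h0 := hS.dotProduct_mulVec_nonneg (fun k => t * (if k = i then (1:ℝ) else 0) + (if k = j then 1 else 0))
        have h0' : (0:ℝ) ≤ (fun k => t * (if k = i then (1:ℝ) else 0) + (if k = j then 1 else 0)) ⬝ᵥ
            (S *ᵥ fun k => t * (if k = i then (1:ℝ) else 0) + (if k = j then 1 else 0)) := by
          simpa using h0
        have hMv : ∀ k, (S *ᵥ fun l => t * (if l = i then (1:ℝ) else 0) + (if l = j then 1 else 0)) k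
            = t * S k i + S k j := by
          intro k
          simp [Matrix.mulVec, dotProduct, mul_add, mul_ite, mul_one, mul_zero,
            add_mul, ite_mul, zero_mul, one_mul, Finset.sum_add_distrib,
            Finset.sum_ite_eq', mul_comm]
        rw [dotProduct, Finset.sum_congr rfl fun k _ => by rw [hMv k]] at h0'
        have hsum : ∑ k, (t * (if k = i then (1:ℝ) else 0) + (if k = j then 1 else 0)) *
            (t * S k i + S k j) = S i i * (t*t) + (2 * S i j) * t + S j j := by
          have hterm : ∀ k, (t * (if k = i then (1:ℝ) else 0) + (if k = j then 1 else 0)) *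
              (t * S k i + S k j)
              = (if k = i then t*t*S k i + t*S k j else 0)
                + (if k = j then t * S k i + S k j else 0) := fun k => by
            by_cases hk : k = i
            · by_cases hk' : k = j
              · exact absurd (hk.symm.trans hk') hij
              · subst hk
                simp only [eq_self_iff_true, if_true, if_neg hk']
                ring
            · by_cases hk' : k = j
              · subst hk'
                simp only [eq_self_iff_true, if_true, if_neg hk]
                ring
              · simp only [if_neg hk, if_neg hk']
                ring
          rw [Finset.sum_congr rfl fun k _ => hterm k, Finset.sum_add_distrib]
          rw [Finset.sum_ite_eq' Finset.univ i fun k => t*t*S k i + t*S k j]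
          rw [Finset.sum_ite_eq' Finset.univ j fun k => t * S k i + S k j]
          simp only [Finset.mem_univ, if_true]
          rw [hherm j i]
          ring
        rw [hsum] at h0'
        exact h0'
      have hd := discrim_le_zero hq
      rw [discrim] at hd
      nlinarith [hd]
  have htrS : 0 ≤ Matrix.trace S := Finset.sum_nonneg fun i _ => hdiag i
  have htrSS : Matrix.trace (S * S) ≤ (Matrix.trace S)^2 := by
    have h1 : Matrix.trace (S * S) = ∑ i, ∑ j, S i j ^ 2 := by
      rw [Matrix.trace]
      simp only [Matrix.diag, Matrix.mul_apply]
      exact Finset.sum_congr rfl fun i _ => Finset.sum_congr rfl fun j _ => by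
        rw [hherm i j, sq]
    have h2 : (Matrix.trace S)^2 = ∑ i, ∑ j, S i i * S j j := by
      rw [Matrix.trace, sq, Finset.sum_mul_sum]
      rfl
    rw [h1, h2]
    exact Finset.sum_le_sum fun i _ => Finset.sum_le_sum fun j _ => hoff i j
  have hfrob : frobNorm A = Real.sqrt (Matrix.trace (S * S)) := by
    rw [hSS, frobNorm]
    congr 1
    rw [Matrix.trace]
    simp only [Matrix.diag, Matrix.mul_apply, Matrix.conjTranspose_apply, star_trivial]
    rw [Finset.sum_comm]
    exact Finset.sum_congr rfl fun j _ => Finset.sum_congr rfl fun i _ => by rw [pow_two]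
  rw [hfrob, nuclearNorm]
  calc Real.sqrt (Matrix.trace (S * S)) ≤ Real.sqrt ((Matrix.trace S)^2) :=
        Real.sqrt_le_sqrt htrSS
    _ = |Matrix.trace S| := Real.sqrt_sq_eq_abs _
    _ = Matrix.trace S := abs_of_nonneg htrS

end StmtAux
namespace StmtAux

lemma centered_sum_zero {n : ℕ} (hn : 0 < n) (x : Fin n → ℝ) :
    ∑ i, (x i - (∑ k, x k)/n) = 0 := by
  have hnn : (0:ℝ) < n := by exact_mod_cast hn
  rw [Finset.sum_sub_distrib, Finset.sum_const, Finset.card_univ, Fintype.card_fin,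
    nsmul_eq_mul]
  field_simp
  ring

lemma centered_norm_le {n : ℕ} (hn : 0 < n) (x : Fin n → ℝ) :
    vecNorm (fun i => x i - (∑ k, x k)/n) ≤ vecNorm x := by
  have hnn : (0:ℝ) < n := by exact_mod_cast hn
  obtain ⟨m, hm⟩ : ∃ m, m = (∑ k, x k)/n := ⟨_, rfl⟩
  have hsx : ∑ k, x k = n * m := by rw [hm]; field_simp
  have hkey : ∑ i, (x i - m)^2 = (∑ i, x i ^2) - n * m^2 := by
    have hexp : ∀ i, (x i - m)^2 = x i^2 - 2*m*x i + m^2 := fun i => by ring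
    rw [Finset.sum_congr rfl fun i _ => hexp i, Finset.sum_add_distrib,
      Finset.sum_sub_distrib, ← Finset.mul_sum, hsx, Finset.sum_const,
      Finset.card_univ, Fintype.card_fin, nsmul_eq_mul]
    ring
  unfold vecNorm
  apply Real.sqrt_le_sqrt
  rw [← hm, hkey]
  nlinarith [sq_nonneg m]

lemma bil_bound {n d : ℕ} (hn : 0 < n) (G : Matrix (Fin n) (Fin n) ℝ) (Cd : ℝ)
    (hCd : 0 ≤ Cd)
    (hrowsum : ∀ i, ∑ j, G i j = (d:ℝ)) (hcolsum : ∀ j, ∑ i, G i j = (d:ℝ))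
    (hperp : ∀ y : Fin n → ℝ, (∑ i, y i) = 0 → vecNorm (G.mulVec y) ≤ Cd * vecNorm y)
    (x y : Fin n → ℝ) :
    |∑ i, ∑ j, x i * ((G i j - (d:ℝ)/n) * y j)| ≤ Cd * (vecNorm x * vecNorm y) := by
  have hnn : (0:ℝ) < n := by exact_mod_cast hn
  obtain ⟨xt, hxt⟩ : ∃ v : Fin n → ℝ, v = fun i => x i - (∑ k, x k)/n := ⟨_, rfl⟩
  obtain ⟨yt, hyt⟩ : ∃ v : Fin n → ℝ, v = fun i => y i - (∑ k, y k)/n := ⟨_, rfl⟩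
  have hxtsum : ∑ i, xt i = 0 := by rw [hxt]; exact centered_sum_zero hn x
  have hytsum : ∑ i, yt i = 0 := by rw [hyt]; exact centered_sum_zero hn y
  have hHrow : ∀ i, ∑ j, (G i j - (d:ℝ)/n) = 0 := by
    intro i
    rw [Finset.sum_sub_distrib, hrowsum, Finset.sum_const, Finset.card_univ,
      Fintype.card_fin, nsmul_eq_mul]
    field_simp
    ring
  have hHcol : ∀ j, ∑ i, (G i j - (d:ℝ)/n) = 0 := by
    intro j
    rw [Finset.sum_sub_distrib, hcolsum, Finset.sum_const, Finset.card_univ,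
      Fintype.card_fin, nsmul_eq_mul]
    field_simp
    ring
  have hstep1 : ∀ i, ∑ j, (G i j - (d:ℝ)/n) * y j = ∑ j, (G i j - (d:ℝ)/n) * yt j := by
    intro i
    have hpt : ∀ j, (G i j - (d:ℝ)/n) * yt j
        = (G i j - (d:ℝ)/n) * y j - ((∑ k, y k)/n) * (G i j - (d:ℝ)/n) := by
      intro j; rw [hyt]; ring
    rw [Finset.sum_congr rfl fun j _ => hpt j, Finset.sum_sub_distrib, ← Finset.mul_sum,
      hHrow, mul_zero, sub_zero]
  have hstep2 : ∑ i, x i * (∑ j, (G i j - (d:ℝ)/n) * yt j)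
      = ∑ i, xt i * (∑ j, (G i j - (d:ℝ)/n) * yt j) := by
    have hpt : ∀ i, xt i * (∑ j, (G i j - (d:ℝ)/n) * yt j)
        = x i * (∑ j, (G i j - (d:ℝ)/n) * yt j)
          - ((∑ k, x k)/n) * (∑ j, (G i j - (d:ℝ)/n) * yt j) := by
      intro i; rw [hxt]; ring
    rw [Finset.sum_congr rfl fun i _ => hpt i, Finset.sum_sub_distrib, ← Finset.mul_sum]
    have hz : ∑ i, ∑ j, (G i j - (d:ℝ)/n) * yt j = 0 := by
      rw [Finset.sum_comm]
      have : ∀ j, ∑ i, (G i j - (d:ℝ)/n) * yt j = 0 := by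
        intro j
        rw [← Finset.sum_mul, hHcol, zero_mul]
      rw [Finset.sum_congr rfl fun j _ => this j, Finset.sum_const, smul_zero]
    rw [hz, mul_zero, sub_zero]
  have hstep3 : ∀ i, ∑ j, (G i j - (d:ℝ)/n) * yt j = (G.mulVec yt) i := by
    intro i
    have hpt : ∀ j, (G i j - (d:ℝ)/n) * yt j = G i j * yt j - ((d:ℝ)/n) * yt j := fun j => by ring
    rw [Finset.sum_congr rfl fun j _ => hpt j, Finset.sum_sub_distrib, ← Finset.mul_sum,
      hytsum, mul_zero, sub_zero]
    rfl
  have hmain : ∑ i, ∑ j, x i * ((G i j - (d:ℝ)/n) * y j) = ∑ i, xt i * (G.mulVec yt) i := by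
    have h1 : ∀ i, ∑ j, x i * ((G i j - (d:ℝ)/n) * y j)
        = x i * ∑ j, (G i j - (d:ℝ)/n) * y j := by
      intro i; rw [Finset.mul_sum]
    rw [Finset.sum_congr rfl fun i _ => h1 i,
      Finset.sum_congr rfl fun i _ => by rw [hstep1 i], hstep2,
      Finset.sum_congr rfl fun i _ => by rw [hstep3 i]]
  rw [hmain]
  calc |∑ i, xt i * (G.mulVec yt) i| ≤ vecNorm xt * vecNorm (G.mulVec yt) := abs_dot_le _ _
    _ ≤ vecNorm xt * (Cd * vecNorm yt) :=
        mul_le_mul_of_nonneg_left (hperp yt hytsum) (vecNorm_nonneg _)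
    _ ≤ vecNorm x * (Cd * vecNorm y) := by
        apply mul_le_mul
        · rw [hxt]; exact centered_norm_le hn x
        · exact mul_le_mul_of_nonneg_left (by rw [hyt]; exact centered_norm_le hn y) hCd
        · exact mul_nonneg hCd (vecNorm_nonneg _)
        · exact vecNorm_nonneg x
    _ = Cd * (vecNorm x * vecNorm y) := by ring

lemma quad_lower {n r d : ℕ} (hn : 0 < n) (hd : 0 < d) {δ : ℝ} {U : Matrix (Fin n) (Fin r) ℝ}
    (S : Finset (Fin n))
    (hS : specNorm (((n:ℝ)/(d:ℝ)) • (∑ k ∈ S, Matrix.vecMulVec (U k) (U k)) - 1) ≤ δ)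
    (a : Fin r → ℝ) :
    (d:ℝ)/n * ((1-δ) * ∑ s, a s ^ 2) ≤ ∑ i ∈ S, (∑ s, U i s * a s)^2 := by
  have hnn : (0:ℝ) < n := by exact_mod_cast hn
  have hdd : (0:ℝ) < d := by exact_mod_cast hd
  obtain ⟨M, hM⟩ : ∃ M, M = ∑ k ∈ S, Matrix.vecMulVec (U k) (U k) := ⟨_, rfl⟩
  rw [← hM] at hS
  have hMentry : ∀ s t, M s t = ∑ k ∈ S, U k s * U k t := by
    intro s t
    rw [hM]
    rw [Matrix.sum_apply]
    exact Finset.sum_congr rfl fun k _ => rfl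
  have hquad : ∑ i ∈ S, (∑ s, U i s * a s)^2 = ∑ s, a s * (M.mulVec a) s := by
    rw [sum_sq_expand S (fun i s => U i s) a]
    refine Finset.sum_congr rfl fun s _ => ?_
    rw [Matrix.mulVec, dotProduct, Finset.mul_sum]
    exact Finset.sum_congr rfl fun t _ => by rw [hMentry s t]; ring
  have hNa := abs_quad_le (((n:ℝ)/(d:ℝ)) • M - 1) a
  have hNv : ∀ s, ((((n:ℝ)/(d:ℝ)) • M - 1).mulVec a) s
      = ((n:ℝ)/d) * ((M.mulVec a) s) - a s := by
    intro s
    rw [Matrix.sub_mulVec, Matrix.smul_mulVec, Matrix.one_mulVec]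
    simp [Pi.sub_apply, Pi.smul_apply, smul_eq_mul]
  have hsplit : ∑ s, a s * ((((n:ℝ)/(d:ℝ)) • M - 1).mulVec a) s
      = ((n:ℝ)/d) * (∑ s, a s * (M.mulVec a) s) - ∑ s, a s^2 := by
    have hpt : ∀ s, a s * ((((n:ℝ)/(d:ℝ)) • M - 1).mulVec a) s
        = ((n:ℝ)/d) * (a s * (M.mulVec a) s) - a s^2 := by
      intro s; rw [hNv s]; ring
    rw [Finset.sum_congr rfl fun s _ => hpt s, Finset.sum_sub_distrib, ← Finset.mul_sum]
  rw [hsplit] at hNa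
  have habs : |((n:ℝ)/d) * (∑ s, a s * (M.mulVec a) s) - ∑ s, a s^2| ≤ δ * ∑ s, a s^2 := by
    refine hNa.trans ?_
    rw [vecNorm_sq]
    exact mul_le_mul_of_nonneg_right hS (sum_sq_nonneg a)
  obtain ⟨X, hX⟩ : ∃ X, X = ∑ s, a s * (M.mulVec a) s := ⟨_, rfl⟩
  rw [← hX] at habs
  have hT : (0:ℝ) ≤ ∑ s, a s ^ 2 := sum_sq_nonneg a
  have h1 : (1-δ) * ∑ s, a s^2 ≤ ((n:ℝ)/d) * X := by
    have := abs_le.mp habs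
    nlinarith [this.1]
  have h2 : ((d:ℝ)/n) * ((1-δ) * ∑ s, a s^2) ≤ ((d:ℝ)/n) * (((n:ℝ)/d) * X) :=
    mul_le_mul_of_nonneg_left h1 (by positivity)
  have h3 : ((d:ℝ)/n) * (((n:ℝ)/d) * X) = X := by field_simp
  rw [hquad, ← hX]
  calc (d:ℝ)/n * ((1-δ) * ∑ s, a s ^ 2) ≤ ((d:ℝ)/n) * (((n:ℝ)/d) * X) := h2
    _ = X := h3

lemma frob_UA {n r : ℕ} {U : Matrix (Fin n) (Fin r) ℝ} (hU : Uᵀ*U = 1)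
    (A : Matrix (Fin r) (Fin n) ℝ) :
    ∑ i, ∑ j, ((U*A) i j)^2 = ∑ s, ∑ j, (A s j)^2 := by
  have hUtU : ∀ s t, (∑ i, U i s * U i t) = if s = t then (1:ℝ) else 0 := by
    intro s t
    have h := congrFun (congrFun hU s) t
    simpa [Matrix.mul_apply, Matrix.transpose_apply, Matrix.one_apply] using h
  rw [Finset.sum_comm]
  have hcol : ∀ j, ∑ i, ((U*A) i j)^2 = ∑ s, (A s j)^2 := by
    intro j
    rw [Finset.sum_congr rfl fun i _ => by rw [Matrix.mul_apply]]
    rw [sum_sq_expand Finset.univ (fun i s => U i s) (fun s => A s j)]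
    rw [Finset.sum_congr rfl fun s _ => Finset.sum_congr rfl fun t _ => by rw [hUtU s t]]
    refine Finset.sum_congr rfl fun s _ => ?_
    simp [ite_mul, one_mul, zero_mul, Finset.sum_ite_eq, sq]
  rw [Finset.sum_congr rfl fun j _ => hcol j]
  exact Finset.sum_comm

lemma frob_BVt {n r : ℕ} {V : Matrix (Fin n) (Fin r) ℝ} (hV : Vᵀ*V = 1)
    (B : Matrix (Fin n) (Fin r) ℝ) :
    ∑ i, ∑ j, ((B*Vᵀ) i j)^2 = ∑ i, ∑ t, (B i t)^2 := by
  have hVtV : ∀ s t, (∑ j, V j s * V j t) = if s = t then (1:ℝ) else 0 := by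
    intro s t
    have h := congrFun (congrFun hV s) t
    simpa [Matrix.mul_apply, Matrix.transpose_apply, Matrix.one_apply] using h
  refine Finset.sum_congr rfl fun i _ => ?_
  have hpt : ∀ j, (B*Vᵀ) i j = ∑ t, V j t * B i t := by
    intro j
    rw [Matrix.mul_apply]
    exact Finset.sum_congr rfl fun t _ => by rw [Matrix.transpose_apply]; ring
  rw [Finset.sum_congr rfl fun j _ => by rw [hpt j]]
  rw [sum_sq_expand Finset.univ (fun j t => V j t) (fun t => B i t)]
  rw [Finset.sum_congr rfl fun s _ => Finset.sum_congr rfl fun t _ => by rw [hVtV s t]]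
  refine Finset.sum_congr rfl fun s _ => ?_
  simp [ite_mul, one_mul, zero_mul, Finset.sum_ite_eq, sq]

lemma cross_PR_zero {n r : ℕ} {U B V : Matrix (Fin n) (Fin r) ℝ}
    (hUB : Uᵀ * B = 0) (A : Matrix (Fin r) (Fin n) ℝ) :
    ∑ i, ∑ j, (U*A) i j * (B*Vᵀ) i j = 0 := by
  have h := master_expand (Matrix.of fun _ _ => (1:ℝ)) U A B V
  have hL : ∑ i, ∑ j, (Matrix.of fun _ _ => (1:ℝ)) i j * ((U*A) i j * (B*Vᵀ) i j)
      = ∑ i, ∑ j, (U*A) i j * (B*Vᵀ) i j := by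
    refine Finset.sum_congr rfl fun i _ => Finset.sum_congr rfl fun j _ => ?_
    simp [Matrix.of_apply]
  rw [hL] at h
  rw [h]
  refine Finset.sum_eq_zero fun s _ => Finset.sum_eq_zero fun t _ => ?_
  have hfact : ∑ i, ∑ j, (U i s * B i t) * ((Matrix.of fun _ _ => (1:ℝ)) i j * (A s j * V j t))
      = (∑ i, U i s * B i t) * (∑ j, A s j * V j t) := by
    rw [Finset.sum_mul_sum]
    refine Finset.sum_congr rfl fun i _ => Finset.sum_congr rfl fun j _ => ?_
    simp [Matrix.of_apply]
  rw [hfact]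
  have hUBst : ∑ i, U i s * B i t = 0 := by
    have h0 := congrFun (congrFun hUB s) t
    simpa [Matrix.mul_apply, Matrix.transpose_apply] using h0
  rw [hUBst, zero_mul]

lemma projT_eq {n r : ℕ} (U V : Matrix (Fin n) (Fin r) ℝ) (Z : Matrix (Fin n) (Fin n) ℝ) :
    projT U V Z = U*(Uᵀ*Z) + ((1 - U*Uᵀ)*Z*V)*Vᵀ := by
  unfold projT
  rw [Matrix.mul_assoc ((1 - U*Uᵀ)*Z) V Vᵀ, Matrix.sub_mul, Matrix.one_mul,
    Matrix.sub_mul, ← Matrix.mul_assoc U Uᵀ Z]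
  abel

lemma proj_add {n r : ℕ} (U V : Matrix (Fin n) (Fin r) ℝ) (Z : Matrix (Fin n) (Fin n) ℝ) :
    projT U V Z + projTperp U V Z = Z := by
  unfold projT projTperp
  noncomm_ring

lemma UtB_zero {n r : ℕ} {U : Matrix (Fin n) (Fin r) ℝ} (hU : Uᵀ*U = 1)
    (V : Matrix (Fin n) (Fin r) ℝ) (Z : Matrix (Fin n) (Fin n) ℝ) :
    Uᵀ * ((1 - U*Uᵀ)*Z*V) = 0 := by
  have h1 : Uᵀ * (1 - U*Uᵀ) = 0 := by
    rw [Matrix.mul_sub, Matrix.mul_one, ← Matrix.mul_assoc, hU, Matrix.one_mul, sub_self]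
  calc Uᵀ * ((1 - U*Uᵀ)*Z*V) = ((Uᵀ * (1 - U*Uᵀ)) * Z) * V := by
        rw [Matrix.mul_assoc (1 - U*Uᵀ) Z V, ← Matrix.mul_assoc, ← Matrix.mul_assoc]
    _ = 0 := by rw [h1, Matrix.zero_mul, Matrix.zero_mul]

end StmtAux
open StmtAux in
/-- for `Z` in the kernel of `P_Ω` with `P_T(Z) ≠ 0`,
`‖P_{T⊥}(Z)‖_F > √(d/(2n))·‖P_T(Z)‖_F`, and a fortiori the same with the
nuclear norm on the left. -/
theorem stmt_14 {n d r : ℕ} (hn : 0 < n) (hd : 0 < d) (hr : 0 < r) {C μ₀ δ : ℝ} (hC : 0 < C)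
    (M : Matrix (Fin n) (Fin n) ℝ) (U V : Matrix (Fin n) (Fin r) ℝ) (s : Fin r → ℝ)
    (hSVD : IsThinSVD M U s V) (hrank : M.rank = r)
    (hA1U : IncoherentRows U μ₀) (hA1V : IncoherentRows V μ₀)
    (hA2U : StrongIncoherence U d δ) (hA2V : StrongIncoherence V d δ)
    (Ω : Finset (Fin n × Fin n)) (hreg : RegularSampling Ω d)
    (hG1 : AssumptionG1 Ω d) (hG2 : AssumptionG2 Ω d C)
    (hsmall : Real.sqrt (2 * (δ ^ 2 + C ^ 2 * μ₀ ^ 2 * r ^ 2 / d)) < 1 / 2) :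
    ∀ Z : Matrix (Fin n) (Fin n) ℝ, sampl Ω Z = 0 → projT U V Z ≠ 0 →
      Real.sqrt ((d : ℝ) / (2 * n)) * frobNorm (projT U V Z) < frobNorm (projTperp U V Z) ∧
      Real.sqrt ((d : ℝ) / (2 * n)) * frobNorm (projT U V Z) <
        nuclearNorm (projTperp U V Z) := by
  intro Z hZ hT
  obtain ⟨hU, hV, -, -⟩ := hSVD
  obtain ⟨hGspec, hGrow, hGcol⟩ := hG1
  obtain ⟨hregrow, hregcol⟩ := hreg
  have hnn : (0:ℝ) < n := by exact_mod_cast hn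
  have hdd : (0:ℝ) < d := by exact_mod_cast hd
  have hrr : (0:ℝ) < r := by exact_mod_cast hr
  have hsd : (0:ℝ) < Real.sqrt d := Real.sqrt_pos.mpr hdd
  have hsd2 : Real.sqrt d * Real.sqrt d = (d:ℝ) := Real.mul_self_sqrt hdd.le
  -- μ₀ ≥ 0
  have hμ : 0 ≤ μ₀ := by
    have h0 : (0:ℝ) ≤ μ₀ * r / n := le_trans (sum_sq_nonneg _) (hA1U ⟨0, hn⟩)
    have h1 : (0:ℝ) ≤ μ₀ * r := by
      have := mul_nonneg h0 hnn.le
      rwa [div_mul_cancel₀ _ hnn.ne'] at this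
    by_contra hneg
    push_neg at hneg
    exact absurd h1 (not_le.mpr (mul_neg_of_neg_of_pos hneg hrr))
  -- smallness
  have hε : δ + C * μ₀ * r / Real.sqrt d < 1/2 := by
    have hb2 : (C * μ₀ * (r:ℝ) / Real.sqrt d)^2 = C^2 * μ₀^2 * r^2 / d := by
      rw [div_pow, mul_pow, mul_pow, Real.sq_sqrt hdd.le]
    have h1 : (δ + C * μ₀ * r / Real.sqrt d)^2
        ≤ 2 * (δ^2 + (C * μ₀ * (r:ℝ) / Real.sqrt d)^2) := by
      nlinarith [sq_nonneg (δ - C * μ₀ * (r:ℝ) / Real.sqrt d)]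
    calc δ + C * μ₀ * (r:ℝ) / Real.sqrt d ≤ |δ + C * μ₀ * (r:ℝ) / Real.sqrt d| := le_abs_self _
      _ = Real.sqrt ((δ + C * μ₀ * (r:ℝ) / Real.sqrt d)^2) := (Real.sqrt_sq_eq_abs _).symm
      _ ≤ Real.sqrt (2 * (δ^2 + (C * μ₀ * (r:ℝ) / Real.sqrt d)^2)) := Real.sqrt_le_sqrt h1
      _ = Real.sqrt (2 * (δ^2 + C^2 * μ₀^2 * r^2 / d)) := by rw [hb2]
      _ < 1/2 := hsmall
  -- G sums
  have hGrowsum : ∀ i, ∑ j, biadj Ω i j = (d:ℝ) := by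
    intro i
    have : ∑ j, biadj Ω i j = ((Finset.univ.filter fun j => (i, j) ∈ Ω).card : ℝ) := by
      simp only [biadj, Matrix.of_apply]
      rw [Finset.sum_boole]
    rw [this, hregrow i]
  have hGcolsum : ∀ j, ∑ i, biadj Ω i j = (d:ℝ) := by
    intro j
    have : ∑ i, biadj Ω i j = ((Finset.univ.filter fun i => (i, j) ∈ Ω).card : ℝ) := by
      simp only [biadj, Matrix.of_apply]
      rw [Finset.sum_boole]
    rw [this, hregcol j]
  have hperp : ∀ y : Fin n → ℝ, (∑ i, y i) = 0 →
      vecNorm ((biadj Ω).mulVec y) ≤ C * Real.sqrt d * vecNorm y := by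
    intro y hy
    refine (sigma2_perp hn (biadj Ω) hGspec hGrow hGcol y hy).trans ?_
    exact mul_le_mul_of_nonneg_right hG2 (vecNorm_nonneg y)
  -- decomposition
  obtain ⟨A, hA⟩ : ∃ A, A = Uᵀ * Z := ⟨_, rfl⟩
  obtain ⟨B, hB⟩ : ∃ B, B = (1 - U*Uᵀ)*Z*V := ⟨_, rfl⟩
  have hW : projT U V Z = U*A + B*Vᵀ := by rw [hA, hB]; exact projT_eq U V Z
  have hUB : Uᵀ*B = 0 := by rw [hB]; exact UtB_zero hU V Z
  obtain ⟨SA, hSA⟩ : ∃ x, x = ∑ s, ∑ j, (A s j)^2 := ⟨_, rfl⟩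
  obtain ⟨SB, hSB⟩ : ∃ x, x = ∑ i, ∑ t, (B i t)^2 := ⟨_, rfl⟩
  have hSA0 : 0 ≤ SA := by
    rw [hSA]; exact Finset.sum_nonneg fun s _ => sum_sq_nonneg _
  have hSB0 : 0 ≤ SB := by
    rw [hSB]; exact Finset.sum_nonneg fun i _ => sum_sq_nonneg _
  -- ‖W‖² = SA + SB
  have hSW : ∑ i, ∑ j, ((projT U V Z) i j)^2 = SA + SB := by
    have hpt : ∀ i j, ((projT U V Z) i j)^2
        = ((U*A) i j)^2 + 2*((U*A) i j * (B*Vᵀ) i j) + ((B*Vᵀ) i j)^2 := by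
      intro i j
      rw [hW, Matrix.add_apply]
      ring
    rw [Finset.sum_congr rfl fun i _ => Finset.sum_congr rfl fun j _ => hpt i j]
    have hrow : ∀ i, ∑ j, (((U*A) i j)^2 + 2*((U*A) i j * (B*Vᵀ) i j) + ((B*Vᵀ) i j)^2)
        = (∑ j, ((U*A) i j)^2) + 2*(∑ j, (U*A) i j * (B*Vᵀ) i j) + ∑ j, ((B*Vᵀ) i j)^2 := by
      intro i
      rw [Finset.sum_add_distrib, Finset.sum_add_distrib, ← Finset.mul_sum]
    rw [Finset.sum_congr rfl fun i _ => hrow i, Finset.sum_add_distrib,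
      Finset.sum_add_distrib, ← Finset.mul_sum]
    rw [cross_PR_zero hUB A, frob_UA hU A, frob_BVt hV B, mul_zero, add_zero, ← hSA, ← hSB]
  -- Q decomposition
  obtain ⟨QA, hQAdef⟩ : ∃ x, x = ∑ i, ∑ j, biadj Ω i j * ((U*A) i j)^2 := ⟨_, rfl⟩
  obtain ⟨QB, hQBdef⟩ : ∃ x, x = ∑ i, ∑ j, biadj Ω i j * ((B*Vᵀ) i j)^2 := ⟨_, rfl⟩
  obtain ⟨QC, hQCdef⟩ : ∃ x, x = ∑ i, ∑ j, biadj Ω i j * ((U*A) i j * (B*Vᵀ) i j) := ⟨_, rfl⟩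
  have hQdecomp : ∑ i, ∑ j, biadj Ω i j * ((projT U V Z) i j)^2 = QA + 2*QC + QB := by
    have hpt : ∀ i j, biadj Ω i j * ((projT U V Z) i j)^2
        = biadj Ω i j * ((U*A) i j)^2 + 2*(biadj Ω i j * ((U*A) i j * (B*Vᵀ) i j))
          + biadj Ω i j * ((B*Vᵀ) i j)^2 := by
      intro i j
      rw [hW, Matrix.add_apply]
      ring
    rw [Finset.sum_congr rfl fun i _ => Finset.sum_congr rfl fun j _ => hpt i j]
    have hrow : ∀ i, ∑ j, (biadj Ω i j * ((U*A) i j)^2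
          + 2*(biadj Ω i j * ((U*A) i j * (B*Vᵀ) i j)) + biadj Ω i j * ((B*Vᵀ) i j)^2)
        = (∑ j, biadj Ω i j * ((U*A) i j)^2)
          + 2*(∑ j, biadj Ω i j * ((U*A) i j * (B*Vᵀ) i j))
          + ∑ j, biadj Ω i j * ((B*Vᵀ) i j)^2 := by
      intro i
      rw [Finset.sum_add_distrib, Finset.sum_add_distrib, ← Finset.mul_sum]
    rw [Finset.sum_congr rfl fun i _ => hrow i, Finset.sum_add_distrib,
      Finset.sum_add_distrib, ← Finset.mul_sum]
    rw [← hQAdef, ← hQBdef, ← hQCdef]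
  have hQA : (d:ℝ)/n * ((1-δ) * SA) ≤ QA := by
    rw [hQAdef, Finset.sum_comm]
    have hcol : ∀ j, (d:ℝ)/n * ((1-δ) * ∑ s, (A s j)^2)
        ≤ ∑ i, biadj Ω i j * ((U*A) i j)^2 := by
      intro j
      have hfil : ∑ i, biadj Ω i j * ((U*A) i j)^2
          = ∑ i ∈ Finset.univ.filter (fun i => (i,j) ∈ Ω), ((U*A) i j)^2 := by
        rw [Finset.sum_filter]
        refine Finset.sum_congr rfl fun i _ => ?_
        simp only [biadj, Matrix.of_apply, boole_mul]
      rw [hfil]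
      have hq := quad_lower hn hd _ (hA2U _ (hregcol j)) (fun t => A t j)
      refine le_trans hq (le_of_eq (Finset.sum_congr rfl fun i _ => ?_))
      rw [Matrix.mul_apply]
    have hswap : SA = ∑ j, ∑ t, (A t j)^2 := by rw [hSA]; exact Finset.sum_comm
    calc (d:ℝ)/n * ((1-δ) * SA) = ∑ j, (d:ℝ)/n * ((1-δ) * ∑ t, (A t j)^2) := by
          rw [hswap, Finset.mul_sum, Finset.mul_sum]
      _ ≤ ∑ j, ∑ i, biadj Ω i j * ((U*A) i j)^2 := Finset.sum_le_sum fun j _ => hcol j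
  have hQB : (d:ℝ)/n * ((1-δ) * SB) ≤ QB := by
    rw [hQBdef]
    have hrow : ∀ i, (d:ℝ)/n * ((1-δ) * ∑ t, (B i t)^2)
        ≤ ∑ j, biadj Ω i j * ((B*Vᵀ) i j)^2 := by
      intro i
      have hfil : ∑ j, biadj Ω i j * ((B*Vᵀ) i j)^2
          = ∑ j ∈ Finset.univ.filter (fun j => (i,j) ∈ Ω), ((B*Vᵀ) i j)^2 := by
        rw [Finset.sum_filter]
        refine Finset.sum_congr rfl fun j _ => ?_
        simp only [biadj, Matrix.of_apply, boole_mul]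
      rw [hfil]
      have hq := quad_lower hn hd (U := V) _ (hA2V _ (hregrow i)) (fun t => B i t)
      refine le_trans hq (le_of_eq (Finset.sum_congr rfl fun j _ => ?_))
      rw [Matrix.mul_apply]
      congr 1
      exact Finset.sum_congr rfl fun t _ => by rw [Matrix.transpose_apply]; ring
    calc (d:ℝ)/n * ((1-δ) * SB) = ∑ i, (d:ℝ)/n * ((1-δ) * ∑ t, (B i t)^2) := by
          rw [hSB, Finset.mul_sum, Finset.mul_sum]
      _ ≤ ∑ i, ∑ j, biadj Ω i j * ((B*Vᵀ) i j)^2 := Finset.sum_le_sum fun i _ => hrow i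
  have hQC : 2 * |QC| ≤ C * Real.sqrt d * (μ₀ * r / n) * (SA + SB) := by
    have hCd0 : (0:ℝ) ≤ C * Real.sqrt d := by positivity
    have hm0 : (0:ℝ) ≤ μ₀ * r / n := div_nonneg (mul_nonneg hμ hrr.le) hnn.le
    obtain ⟨H, hH⟩ : ∃ H : Matrix (Fin n) (Fin n) ℝ,
        H = Matrix.of (fun i j => biadj Ω i j - (d:ℝ)/n) := ⟨_, rfl⟩
    have hsplit : QC = ∑ i, ∑ j, H i j * ((U*A) i j * (B*Vᵀ) i j) := by
      rw [hQCdef]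
      have hpt : ∀ i j, biadj Ω i j * ((U*A) i j * (B*Vᵀ) i j)
          = H i j * ((U*A) i j * (B*Vᵀ) i j) + (d:ℝ)/n * ((U*A) i j * (B*Vᵀ) i j) := by
        intro i j
        rw [hH]
        simp only [Matrix.of_apply]
        ring
      rw [Finset.sum_congr rfl fun i _ => Finset.sum_congr rfl fun j _ => hpt i j]
      have hrow : ∀ i, ∑ j, (H i j * ((U*A) i j * (B*Vᵀ) i j)
            + (d:ℝ)/n * ((U*A) i j * (B*Vᵀ) i j))
          = (∑ j, H i j * ((U*A) i j * (B*Vᵀ) i j))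
            + (d:ℝ)/n * ∑ j, (U*A) i j * (B*Vᵀ) i j := by
        intro i
        rw [Finset.sum_add_distrib, ← Finset.mul_sum]
      rw [Finset.sum_congr rfl fun i _ => hrow i, Finset.sum_add_distrib, ← Finset.mul_sum]
      rw [cross_PR_zero hUB A, mul_zero, add_zero]
    have hexp := master_expand H U A B V
    have hbil : ∀ p : Fin r × Fin r,
        |∑ i, ∑ j, (U i p.1 * B i p.2) * (H i j * (A p.1 j * V j p.2))|
        ≤ C * Real.sqrt d * (vecNorm (fun i => U i p.1 * B i p.2)
            * vecNorm (fun j => A p.1 j * V j p.2)) := by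
      intro p
      have hb := bil_bound hn (biadj Ω) (C * Real.sqrt d) hCd0 hGrowsum hGcolsum hperp
        (fun i => U i p.1 * B i p.2) (fun j => A p.1 j * V j p.2)
      refine le_trans (le_of_eq ?_) hb
      congr 1
      refine Finset.sum_congr rfl fun i _ => Finset.sum_congr rfl fun j _ => ?_
      rw [hH]
      simp only [Matrix.of_apply]
    obtain ⟨F, hF⟩ : ∃ F : Fin r × Fin r → ℝ,
        F = fun p => vecNorm (fun i => U i p.1 * B i p.2) := ⟨_, rfl⟩
    obtain ⟨Gf, hGf⟩ : ∃ Gf : Fin r × Fin r → ℝ,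
        Gf = fun p => vecNorm (fun j => A p.1 j * V j p.2) := ⟨_, rfl⟩
    have habs : |QC| ≤ C * Real.sqrt d * ∑ p : Fin r × Fin r, F p * Gf p := by
      rw [hsplit, hexp]
      calc |∑ s, ∑ t, ∑ i, ∑ j, (U i s * B i t) * (H i j * (A s j * V j t))|
          ≤ ∑ s, ∑ t, |∑ i, ∑ j, (U i s * B i t) * (H i j * (A s j * V j t))| :=
            (Finset.abs_sum_le_sum_abs _ _).trans
              (Finset.sum_le_sum fun s _ => Finset.abs_sum_le_sum_abs _ _)
        _ ≤ ∑ s, ∑ t, C * Real.sqrt d * (F (s,t) * Gf (s,t)) := by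
            refine Finset.sum_le_sum fun s _ => Finset.sum_le_sum fun t _ => ?_
            have hb2 := hbil (s,t)
            simp only [hF, hGf]
            exact hb2
        _ = C * Real.sqrt d * ∑ p : Fin r × Fin r, F p * Gf p := by
            rw [Finset.sum_congr rfl fun s _ => (Finset.mul_sum _ _ _).symm,
              ← Finset.mul_sum]
            congr 1
            exact (Fintype.sum_prod_type (f := fun p : Fin r × Fin r => F p * Gf p)).symm
    have hCS : ∑ p : Fin r × Fin r, F p * Gf p
        ≤ Real.sqrt (∑ p, F p ^2) * Real.sqrt (∑ p, Gf p ^2) :=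
      Real.sum_mul_le_sqrt_mul_sqrt _ _ _
    have hFsq : ∑ p : Fin r × Fin r, F p ^2 ≤ (μ₀ * r / n) * SB := by
      rw [hF]
      have h1 : ∀ p : Fin r × Fin r,
          (vecNorm (fun i => U i p.1 * B i p.2))^2 = ∑ i, (U i p.1 * B i p.2)^2 :=
        fun p => vecNorm_sq _
      rw [Finset.sum_congr rfl fun p _ => h1 p, Fintype.sum_prod_type]
      have h2 : ∑ s, ∑ t, ∑ i, (U i s * B i t)^2
          = ∑ i, (∑ s, (U i s)^2) * (∑ t, (B i t)^2) := by
        calc ∑ s, ∑ t, ∑ i, (U i s * B i t)^2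
            = ∑ s, ∑ i, ∑ t, (U i s * B i t)^2 :=
              Finset.sum_congr rfl fun s _ => Finset.sum_comm
          _ = ∑ i, ∑ s, ∑ t, (U i s * B i t)^2 := Finset.sum_comm
          _ = ∑ i, (∑ s, (U i s)^2) * (∑ t, (B i t)^2) := by
              refine Finset.sum_congr rfl fun i _ => ?_
              rw [Finset.sum_mul_sum]
              exact Finset.sum_congr rfl fun a _ => Finset.sum_congr rfl fun b _ => by
                rw [mul_pow]
      rw [h2, hSB, Finset.mul_sum]
      exact Finset.sum_le_sum fun i _ =>
        mul_le_mul_of_nonneg_right (hA1U i) (sum_sq_nonneg _)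
    have hGsq : ∑ p : Fin r × Fin r, Gf p ^2 ≤ (μ₀ * r / n) * SA := by
      rw [hGf]
      have h1 : ∀ p : Fin r × Fin r,
          (vecNorm (fun j => A p.1 j * V j p.2))^2 = ∑ j, (A p.1 j * V j p.2)^2 :=
        fun p => vecNorm_sq _
      rw [Finset.sum_congr rfl fun p _ => h1 p, Fintype.sum_prod_type]
      have h2 : ∑ s, ∑ t, ∑ j, (A s j * V j t)^2
          = ∑ j, (∑ s, (A s j)^2) * (∑ t, (V j t)^2) := by
        calc ∑ s, ∑ t, ∑ j, (A s j * V j t)^2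
            = ∑ s, ∑ j, ∑ t, (A s j * V j t)^2 :=
              Finset.sum_congr rfl fun s _ => Finset.sum_comm
          _ = ∑ j, ∑ s, ∑ t, (A s j * V j t)^2 := Finset.sum_comm
          _ = ∑ j, (∑ s, (A s j)^2) * (∑ t, (V j t)^2) := by
              refine Finset.sum_congr rfl fun j _ => ?_
              rw [Finset.sum_mul_sum]
              exact Finset.sum_congr rfl fun a _ => Finset.sum_congr rfl fun b _ => by
                rw [mul_pow]
      have hSA' : SA = ∑ j, ∑ a, (A a j)^2 := by rw [hSA]; exact Finset.sum_comm
      rw [h2, hSA', Finset.mul_sum]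
      exact Finset.sum_le_sum fun j _ =>
        le_trans (mul_le_mul_of_nonneg_left (hA1V j) (sum_sq_nonneg _))
          (le_of_eq (mul_comm _ _))
    have hfin : ∑ p : Fin r × Fin r, F p * Gf p ≤ (μ₀ * r / n) * ((SA + SB)/2) := by
      refine hCS.trans ?_
      have hmm : Real.sqrt (μ₀*r/n) * Real.sqrt (μ₀*r/n) = μ₀*r/n := Real.mul_self_sqrt hm0
      calc Real.sqrt (∑ p, F p^2) * Real.sqrt (∑ p, Gf p^2)
          ≤ Real.sqrt ((μ₀*r/n)*SB) * Real.sqrt ((μ₀*r/n)*SA) :=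
            mul_le_mul (Real.sqrt_le_sqrt hFsq) (Real.sqrt_le_sqrt hGsq)
              (Real.sqrt_nonneg _) (Real.sqrt_nonneg _)
        _ = (μ₀*r/n) * (Real.sqrt SB * Real.sqrt SA) := by
            rw [Real.sqrt_mul hm0 SB, Real.sqrt_mul hm0 SA]
            linear_combination (Real.sqrt SB * Real.sqrt SA) * hmm
        _ ≤ (μ₀*r/n) * ((SA+SB)/2) := by
            have h2ab : 2 * Real.sqrt SB * Real.sqrt SA ≤ SB + SA := by
              have h3 := two_mul_le_add_sq (Real.sqrt SB) (Real.sqrt SA)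
              rwa [Real.sq_sqrt hSB0, Real.sq_sqrt hSA0] at h3
            apply mul_le_mul_of_nonneg_left _ hm0
            linarith
    calc 2 * |QC| ≤ 2 * (C * Real.sqrt d * ∑ p : Fin r × Fin r, F p * Gf p) := by
          linarith [habs]
      _ ≤ 2 * (C * Real.sqrt d * ((μ₀*r/n) * ((SA+SB)/2))) := by
          have := mul_le_mul_of_nonneg_left hfin hCd0
          linarith
      _ = C * Real.sqrt d * (μ₀ * r / n) * (SA + SB) := by ring
  have hupper : ∑ i, ∑ j, biadj Ω i j * ((projT U V Z) i j)^2
      ≤ ∑ i, ∑ j, ((projTperp U V Z) i j)^2 := by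
    have hZentry : ∀ i j, (i,j) ∈ Ω → Z i j = 0 := by
      intro i j hij
      have h0 := congrFun (congrFun hZ i) j
      simpa [sampl, Matrix.of_apply, hij] using h0
    have hadd : ∀ i j, (projT U V Z) i j + (projTperp U V Z) i j = Z i j := by
      intro i j
      have h0 := congrFun (congrFun (proj_add U V Z) i) j
      simpa [Matrix.add_apply] using h0
    refine Finset.sum_le_sum fun i _ => Finset.sum_le_sum fun j _ => ?_
    by_cases hij : (i,j) ∈ Ω
    · have h1 : biadj Ω i j = 1 := by simp [biadj, hij]
      have h2 : (projT U V Z) i j = - (projTperp U V Z) i j := by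
        have h3 := hadd i j
        rw [hZentry i j hij] at h3
        linarith
      rw [h1, h2, one_mul, neg_sq]
    · have h1 : biadj Ω i j = 0 := by simp [biadj, hij]
      rw [h1, zero_mul]
      exact sq_nonneg _
  have hSWpos : 0 < SA + SB := by
    rw [← hSW]
    obtain ⟨i, j, hij⟩ : ∃ i j, (projT U V Z) i j ≠ 0 := by
      by_contra hcon
      push_neg at hcon
      exact hT (Matrix.ext fun i j => by rw [hcon i j, Matrix.zero_apply])
    have hipos : 0 < ∑ j', ((projT U V Z) i j')^2 :=
      Finset.sum_pos' (fun _ _ => sq_nonneg _)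
        ⟨j, Finset.mem_univ j, (pow_pos (abs_pos.mpr hij) 2).trans_le (by rw [sq_abs])⟩
    exact Finset.sum_pos' (fun _ _ => Finset.sum_nonneg fun _ _ => sq_nonneg _)
      ⟨i, Finset.mem_univ i, hipos⟩
  -- final numeric comparison
  have hkey : (d:ℝ)/(2*n) * (SA + SB) < ∑ i, ∑ j, ((projTperp U V Z) i j)^2 := by
    have hid : C*Real.sqrt d*(μ₀*r/n) = (d:ℝ)/n*(C*μ₀*r/Real.sqrt d) := by
      field_simp
      linear_combination μ₀ * hsd2
    have ht : (0:ℝ) < (d:ℝ)/n := by positivity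
    have hblt : (1/2)*(SA+SB) < (1-δ-(C*μ₀*r/Real.sqrt d))*(SA+SB) := by
      apply mul_lt_mul_of_pos_right _ hSWpos
      linarith [hε]
    have hlow : (d:ℝ)/n * ((1-δ-(C*μ₀*r/Real.sqrt d))*(SA+SB)) ≤ QA + 2*QC + QB := by
      have h1 : -|QC| ≤ QC := neg_abs_le QC
      have h2 : (d:ℝ)/n * ((1-δ-(C*μ₀*r/Real.sqrt d))*(SA+SB))
          = (d:ℝ)/n * ((1-δ)*SA) + (d:ℝ)/n * ((1-δ)*SB)
            - C*Real.sqrt d*(μ₀*r/n)*(SA+SB) := by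
        rw [hid]; ring
      linarith [hQA, hQB, hQC]
    calc (d:ℝ)/(2*n) * (SA + SB) = (d:ℝ)/n * ((1/2)*(SA+SB)) := by ring
      _ < (d:ℝ)/n * ((1-δ-(C*μ₀*r/Real.sqrt d))*(SA+SB)) :=
          mul_lt_mul_of_pos_left hblt ht
      _ ≤ QA + 2*QC + QB := hlow
      _ = ∑ i, ∑ j, biadj Ω i j * ((projT U V Z) i j)^2 := hQdecomp.symm
      _ ≤ ∑ i, ∑ j, ((projTperp U V Z) i j)^2 := hupper
  have hfrobW : frobNorm (projT U V Z) = Real.sqrt (SA + SB) := by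
    rw [frobNorm, hSW]
  have hfrobWp : frobNorm (projTperp U V Z)
      = Real.sqrt (∑ i, ∑ j, ((projTperp U V Z) i j)^2) := rfl
  have hgoal1 : Real.sqrt ((d : ℝ) / (2 * n)) * frobNorm (projT U V Z)
      < frobNorm (projTperp U V Z) := by
    rw [hfrobW, hfrobWp, ← Real.sqrt_mul (by positivity) (SA + SB)]
    exact Real.sqrt_lt_sqrt (by positivity) hkey
  refine ⟨hgoal1, lt_of_lt_of_le hgoal1 (frob_le_nuclear _)⟩
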